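/- Assume γ is the complex conjugate of α and δ is the complex conjugate of β (so v(x,y) is the complex conjugate of u(x,y) for every (x,y) ∈ ℤ²; this is the case D < 0), and let r ≥ 3. Let (x,y) and (x*,y*) be primitive solutions of 0 < |F(x,y)| ≤ h with (x*,y*) ∉ {(x,y), (−x,−y)}, both related to the same r-th root of unity ω, and suppose ζ(x*,y*) ≤ ζ(x,y). Then Z(x*,y*) ≥ |j|/(2·h^{1/r}). -/

import Mathlib

open Complex

noncomputable section

/-- The linear form `αx + βy` evaluated at an integer pair. -/
def lin (α β : ℂ) (x y : ℤ) : ℂ := α * (x : ℂ) + β * (y : ℂ)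

/-- The diagonalizable binary form `F(x,y) = (αx+βy)^r − (γx+δy)^r`. -/
def form (α β γ δ : ℂ) (r : ℕ) (x y : ℤ) : ℂ := lin α β x y ^ r - lin γ δ x y ^ r

/-- `Z(x,y) = max(|u|,|v|)`. -/
def Zmax (α β γ δ : ℂ) (x y : ℤ) : ℝ :=
  max (‖lin α β x y‖) (‖lin γ δ x y‖)

/-- `ζ(x,y) = |F(x,y)| / Z(x,y)^r`. -/
def zetaF (α β γ δ : ℂ) (r : ℕ) (x y : ℤ) : ℝ :=
  ‖form α β γ δ r x y‖ / Zmax α β γ δ x y ^ r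

/-- `μ(x,y) = v^r / u^r`. -/
def muF (α β γ δ : ℂ) (r : ℕ) (x y : ℤ) : ℂ :=
  lin γ δ x y ^ r / lin α β x y ^ r

/-- `F` has integer coefficients: each coefficient
`binom(r,k)·(α^k β^{r−k} − γ^k δ^{r−k})` is a rational integer. -/
def IntCoeffs (α β γ δ : ℂ) (r : ℕ) : Prop :=
  ∀ k ≤ r, ∃ n : ℤ, (r.choose k : ℂ) * (α ^ k * β ^ (r - k) - γ ^ k * δ ^ (r - k)) = (n : ℂ)

/-- `(x,y)` is a primitive solution of the Thue inequality `0 < |F(x,y)| ≤ h`. -/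
def IsPrimSol (α β γ δ : ℂ) (r h : ℕ) (x y : ℤ) : Prop :=
  Int.gcd x y = 1 ∧ 0 < ‖form α β γ δ r x y‖ ∧
    ‖form α β γ δ r x y‖ ≤ (h : ℝ)

/-- The solution `(x,y)` is related to the `r`-th root of unity `ω`: the principal
argument of `(u/v)·ω⁻¹` lies in `(−π/r, π/r]`. -/
def RelatedTo (α β γ δ : ℂ) (r : ℕ) (ω : ℂ) (x y : ℤ) : Prop :=
  (lin α β x y / lin γ δ x y * ω⁻¹).arg ∈ Set.Ioc (-(Real.pi / r)) (Real.pi / r)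

/-! ### Auxiliary lemmas -/

private theorem abs_exp_mul_I_sub_one (t : ℝ) :
    ‖Complex.exp ((t : ℂ) * I) - 1‖ = 2 * |Real.sin (t / 2)| := by
  have hz : Complex.exp ((t:ℂ) * Complex.I) - 1
      = ((Real.cos t - 1 : ℝ) : ℂ) + ((Real.sin t : ℝ) : ℂ) * Complex.I := by
    rw [Complex.exp_mul_I]
    push_cast [← Complex.ofReal_cos, ← Complex.ofReal_sin]
    ring
  rw [hz, Complex.norm_add_mul_I]
  have h1 : (Real.cos t - 1) ^ 2 + Real.sin t ^ 2 = 4 * ((1 - Real.cos t)/2) := by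
    have := Real.sin_sq_add_cos_sq t
    ring_nf
    nlinarith [this]
  rw [h1]
  rw [show (4 : ℝ) * ((1 - Real.cos t)/2) = 2^2 * ((1 - Real.cos t)/2) by ring]
  rw [Real.sqrt_mul (by norm_num), Real.sqrt_sq (by norm_num), ← Real.abs_sin_half]

private theorem abs_exp_sub_exp (s t : ℝ) :
    ‖Complex.exp ((s : ℂ) * I) - Complex.exp ((t : ℂ) * I)‖
      = 2 * |Real.sin ((s - t) / 2)| := by
  have e : (t:ℂ) * I + ((s - t : ℝ) : ℂ) * I = (s:ℂ) * I := by push_cast; ring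
  have h1 : Complex.exp ((s:ℂ) * I) - Complex.exp ((t:ℂ) * I)
      = Complex.exp ((t:ℂ) * I) * (Complex.exp (((s - t : ℝ) : ℂ) * I) - 1) := by
    rw [mul_sub, mul_one, ← Complex.exp_add, e]
  rw [h1, norm_mul, Complex.norm_exp_ofReal_mul_I, one_mul, abs_exp_mul_I_sub_one]

private theorem cross_ne (x y xs ys : ℤ) (h1 : Int.gcd x y = 1) (h2 : Int.gcd xs ys = 1)
    (hne : (xs, ys) ≠ (x, y) ∧ (xs, ys) ≠ (-x, -y)) : x * ys - y * xs ≠ 0 := by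
  intro h0
  have heq : x * ys = y * xs := by linarith
  have c1 : IsCoprime x y := Int.isCoprime_iff_gcd_eq_one.2 h1
  have c2 : IsCoprime xs ys := Int.isCoprime_iff_gcd_eq_one.2 h2
  have d1 : x ∣ xs := c1.dvd_of_dvd_mul_left ⟨ys, heq.symm ▸ by ring⟩
  have d2 : xs ∣ x := c2.dvd_of_dvd_mul_left ⟨y, by linarith [heq]⟩
  have d3 : y ∣ ys := c1.symm.dvd_of_dvd_mul_left ⟨xs, by linarith [heq]⟩
  have d4 : ys ∣ y := c2.symm.dvd_of_dvd_mul_left ⟨x, by linarith [heq]⟩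
  have hx : xs = x ∨ xs = -x :=
    Int.natAbs_eq_natAbs_iff.1
      (Nat.dvd_antisymm (Int.natAbs_dvd_natAbs.2 d2) (Int.natAbs_dvd_natAbs.2 d1))
  have hy : ys = y ∨ ys = -y :=
    Int.natAbs_eq_natAbs_iff.1
      (Nat.dvd_antisymm (Int.natAbs_dvd_natAbs.2 d4) (Int.natAbs_dvd_natAbs.2 d3))
  rcases hx with hx | hx <;> rcases hy with hy | hy
  · exact hne.1 (by rw [hx, hy])
  · rw [hx, hy] at heq
    have hxy : x * y = 0 := by linarith
    rcases mul_eq_zero.1 hxy with h | h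
    · exact hne.2 (by rw [hx, hy, h]; simp)
    · exact hne.1 (by rw [hx, hy, h]; simp)
  · rw [hx, hy] at heq
    have hxy : x * y = 0 := by linarith
    rcases mul_eq_zero.1 hxy with h | h
    · exact hne.1 (by rw [hx, hy, h]; simp)
    · exact hne.2 (by rw [hx, hy, h]; simp)
  · exact hne.2 (by rw [hx, hy])

private theorem sin_abs_eq {t : ℝ} (ht : |t| ≤ Real.pi) : |Real.sin t| = Real.sin |t| := by
  rcases le_or_gt 0 t with h | h
  · rw [_root_.abs_of_nonneg h, _root_.abs_of_nonneg
      (Real.sin_nonneg_of_nonneg_of_le_pi h (by rwa [_root_.abs_of_nonneg h] at ht))]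
  · have h2 : Real.sin (-t) ≥ 0 :=
      Real.sin_nonneg_of_nonneg_of_le_pi (by linarith) (by rwa [_root_.abs_of_neg h] at ht)
    rw [Real.sin_neg] at h2
    rw [_root_.abs_of_neg h, Real.sin_neg, _root_.abs_of_nonpos (by linarith)]

private theorem pi_pow_le (r : ℕ) (hr : 3 ≤ r) : Real.pi ^ r ≤ 2 * (r : ℝ) ^ r := by
  rcases eq_or_lt_of_le hr with h | h
  · subst h
    have : Real.pi ^ 3 ≤ 3.15 ^ 3 := pow_le_pow_left₀ Real.pi_pos.le Real.pi_lt_d2.le 3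
    norm_num at this ⊢
    linarith
  · have h4 : (4 : ℝ) ≤ (r : ℝ) := by exact_mod_cast h
    have hπr : Real.pi ≤ (r : ℝ) := le_trans (by linarith [Real.pi_lt_d2]) h4
    have h1 : Real.pi ^ r ≤ (r : ℝ) ^ r := pow_le_pow_left₀ Real.pi_pos.le hπr r
    nlinarith [pow_nonneg (by linarith : (0:ℝ) ≤ (r:ℝ)) r]

private theorem core_real (r : ℕ) (hr : 3 ≤ r) (φ ψ : ℝ)
    (hφ : φ ∈ Set.Ioc (-(Real.pi / r)) (Real.pi / r))
    (hψ : ψ ∈ Set.Ioc (-(Real.pi / r)) (Real.pi / r))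
    (hle : |Real.sin ((r : ℝ) * ψ / 2)| ≤ |Real.sin ((r : ℝ) * φ / 2)|) :
    |Real.sin ((φ - ψ) / 2)| ^ r ≤ 2 * |Real.sin ((r : ℝ) * φ / 2)| := by
  have hrpos : (0 : ℝ) < (r : ℝ) := by positivity
  have hr0 : r ≠ 0 := by omega
  have habsφ : |φ| ≤ Real.pi / r := abs_le.2 ⟨hφ.1.le, hφ.2⟩
  have habsψ : |ψ| ≤ Real.pi / r := abs_le.2 ⟨hψ.1.le, hψ.2⟩
  have hb : ∀ t : ℝ, |t| ≤ Real.pi / r →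
      |(r : ℝ) * t / 2| = (r : ℝ) * |t| / 2 ∧ (r : ℝ) * |t| / 2 ≤ Real.pi / 2 := by
    intro t ht
    refine ⟨by rw [_root_.abs_div, _root_.abs_mul, _root_.abs_of_nonneg hrpos.le, _root_.abs_two], ?_⟩
    have : (r : ℝ) * |t| ≤ Real.pi := by rw [le_div_iff₀ hrpos] at ht; linarith
    linarith
  obtain ⟨eφ, bφ⟩ := hb φ habsφ
  obtain ⟨eψ, bψ⟩ := hb ψ habsψ
  have sφ : |Real.sin ((r : ℝ) * φ / 2)| = Real.sin ((r : ℝ) * |φ| / 2) := by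
    rw [sin_abs_eq (by linarith [Real.pi_pos] : |(r:ℝ) * φ / 2| ≤ Real.pi), eφ]
  have sψ : |Real.sin ((r : ℝ) * ψ / 2)| = Real.sin ((r : ℝ) * |ψ| / 2) := by
    rw [sin_abs_eq (by linarith [Real.pi_pos] : |(r:ℝ) * ψ / 2| ≤ Real.pi), eψ]
  rw [sφ]
  rw [sφ, sψ] at hle
  have hψφ : |ψ| ≤ |φ| := by
    by_contra hc
    push_neg at hc
    have hx0 : (0:ℝ) ≤ (r:ℝ) * |φ| / 2 := by positivity
    have : Real.sin ((r : ℝ) * |φ| / 2) < Real.sin ((r : ℝ) * |ψ| / 2) :=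
      Real.sin_lt_sin_of_lt_of_le_pi_div_two (by linarith [Real.pi_pos]) bψ (by nlinarith)
    linarith
  have hs : |Real.sin ((φ - ψ) / 2)| ≤ |φ| := by
    calc |Real.sin ((φ - ψ) / 2)| ≤ |(φ - ψ) / 2| := Real.abs_sin_le_abs
    _ = |φ - ψ| / 2 := by rw [_root_.abs_div, _root_.abs_two]
    _ ≤ (|φ| + |ψ|) / 2 := by linarith [abs_sub φ ψ]
    _ ≤ |φ| := by linarith
  have hsin0 : (0:ℝ) ≤ Real.sin ((r : ℝ) * |φ| / 2) :=
    Real.sin_nonneg_of_nonneg_of_le_pi (by positivity) (by linarith [Real.pi_pos])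
  rcases eq_or_lt_of_le (abs_nonneg φ) with h0 | h0
  · have : |Real.sin ((φ - ψ) / 2)| = 0 := le_antisymm (h0 ▸ hs) (abs_nonneg _)
    rw [this, zero_pow hr0]
    positivity
  · have jordan : 2 / Real.pi * ((r : ℝ) * |φ| / 2) ≤ Real.sin ((r : ℝ) * |φ| / 2) :=
      Real.mul_le_sin (by positivity) bφ
    have hpow : |φ| ^ r ≤ 2 * Real.sin ((r : ℝ) * |φ| / 2) := by
      have key : |φ| ^ r ≤ 2 * (r : ℝ) * |φ| / Real.pi := by
        have e : |φ| ^ r = |φ| ^ (r - 1) * |φ| := by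
          rw [← pow_succ, Nat.sub_add_cancel (by omega)]
        have h1 : |φ| ^ (r - 1) ≤ (Real.pi / r) ^ (r - 1) :=
          pow_le_pow_left₀ (abs_nonneg φ) habsφ _
        have h2 : (Real.pi / r) ^ (r - 1) ≤ 2 * (r : ℝ) / Real.pi := by
          rw [div_pow, div_le_div_iff₀ (by positivity) Real.pi_pos]
          have e2 : Real.pi ^ (r - 1) * Real.pi = Real.pi ^ r := by
            rw [← pow_succ, Nat.sub_add_cancel (by omega)]
          have e3 : 2 * (r : ℝ) * (r : ℝ) ^ (r - 1) = 2 * (r : ℝ) ^ r := by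
            rw [mul_assoc, mul_comm (r:ℝ) _, ← pow_succ, Nat.sub_add_cancel (by omega)]
          rw [e2, e3]
          exact pi_pow_le r hr
        calc |φ| ^ r = |φ| ^ (r - 1) * |φ| := e
        _ ≤ (2 * (r : ℝ) / Real.pi) * |φ| := by
            apply mul_le_mul_of_nonneg_right _ (abs_nonneg φ)
            exact h1.trans h2
        _ = 2 * (r : ℝ) * |φ| / Real.pi := by ring
      have : 2 * (r : ℝ) * |φ| / Real.pi ≤ 2 * Real.sin ((r : ℝ) * |φ| / 2) := by
        have hπ := Real.pi_pos
        rw [div_le_iff₀ hπ]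
        have h5 := jordan
        rw [div_mul_eq_mul_div, div_le_iff₀ hπ] at h5
        linarith
      linarith
    calc |Real.sin ((φ - ψ) / 2)| ^ r ≤ |φ| ^ r := pow_le_pow_left₀ (abs_nonneg _) hs r
    _ ≤ 2 * Real.sin ((r : ℝ) * |φ| / 2) := hpow

/-- (Case `D < 0`: `γ = conj α`, `δ = conj β`.) Let `r ≥ 3` and let
`(x,y)`, `(x*,y*)` be primitive solutions of `0 < |F| ≤ h`, distinct up to sign, both
related to the same `r`-th root of unity `ω`, with `ζ(x*,y*) ≤ ζ(x,y)`. Then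
`Z(x*,y*) ≥ |j|/(2·h^{1/r})`. -/
theorem Zstar_lower_bound_Dneg (r h : ℕ) (hr : 3 ≤ r) (hh : 1 ≤ h)
    (α β γ δ j : ℂ) (hγ : γ = (starRingEnd ℂ) α) (hδ : δ = (starRingEnd ℂ) β)
    (hj : j = α * δ - β * γ) (hj0 : j ≠ 0) (hint : IntCoeffs α β γ δ r)
    (x y xs ys : ℤ)
    (hsol : IsPrimSol α β γ δ r h x y) (hsols : IsPrimSol α β γ δ r h xs ys)
    (hne : (xs, ys) ≠ (x, y) ∧ (xs, ys) ≠ (-x, -y))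
    (ω : ℂ) (hω : ω ^ r = 1)
    (hrel : RelatedTo α β γ δ r ω x y) (hrels : RelatedTo α β γ δ r ω xs ys)
    (hζ : zetaF α β γ δ r xs ys ≤ zetaF α β γ δ r x y) :
    ‖j‖ / (2 * (h : ℝ) ^ (1 / (r : ℝ))) ≤ Zmax α β γ δ xs ys := by
  obtain ⟨hg, hF0, hFh⟩ := hsol
  obtain ⟨hgs, hFs0, hFsh⟩ := hsols
  have hr0 : r ≠ 0 := by omega
  set u : ℂ := lin α β x y with hu
  set us : ℂ := lin α β xs ys with hus
  have hv : lin γ δ x y = (starRingEnd ℂ) u := by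
    simp [lin, hu, hγ, hδ, map_add, map_mul, map_intCast]
  have hvs : lin γ δ xs ys = (starRingEnd ℂ) us := by
    simp [lin, hus, hγ, hδ, map_add, map_mul, map_intCast]
  have hform : form α β γ δ r x y = u ^ r - ((starRingEnd ℂ) u) ^ r := by
    rw [form, hv]
  have hforms : form α β γ δ r xs ys = us ^ r - ((starRingEnd ℂ) us) ^ r := by
    rw [form, hvs]
  -- nonvanishing
  have hu0 : u ≠ 0 := by
    intro h0
    rw [hform, h0] at hF0
    simp [zero_pow hr0] at hF0
  have hus0 : us ≠ 0 := by
    intro h0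
    rw [hforms, h0] at hFs0
    simp [zero_pow hr0] at hFs0
  have hcu : (starRingEnd ℂ) u ≠ 0 := by simpa using hu0
  have hcus : (starRingEnd ℂ) us ≠ 0 := by simpa using hus0
  have hZ : Zmax α β γ δ x y = ‖u‖ := by
    simp only [Zmax, ← hu, hv, Complex.norm_conj, max_self]
  have hZs : Zmax α β γ δ xs ys = ‖us‖ := by
    simp only [Zmax, ← hus, hvs, Complex.norm_conj, max_self]
  have hZpos : 0 < ‖u‖ := norm_pos_iff.2 hu0
  have hZspos : 0 < ‖us‖ := norm_pos_iff.2 hus0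
  -- ω is on the unit circle
  have hωabs : ‖ω‖ = 1 := by
    have h1 : ‖ω‖ ^ r = 1 := by rw [← norm_pow, hω, norm_one]
    rcases lt_trichotomy (‖ω‖) 1 with hc | hc | hc
    · have := pow_lt_one₀ (norm_nonneg ω) hc hr0; linarith
    · exact hc
    · have := one_lt_pow₀ hc hr0; linarith
  have hω0 : ω ≠ 0 := by
    intro h0; rw [h0, norm_zero] at hωabs; norm_num at hωabs
  -- the unit complex numbers a, as
  set a : ℂ := u / (starRingEnd ℂ) u * ω⁻¹ with ha
  set as : ℂ := us / (starRingEnd ℂ) us * ω⁻¹ with has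
  have habs_a : ‖a‖ = 1 := by
    rw [ha, norm_mul, norm_div, Complex.norm_conj, norm_inv, hωabs]
    field_simp
  have habs_as : ‖as‖ = 1 := by
    rw [has, norm_mul, norm_div, Complex.norm_conj, norm_inv, hωabs]
    field_simp
  have ha_exp : Complex.exp ((a.arg : ℂ) * I) = a := by
    have h1 := Complex.norm_mul_exp_arg_mul_I a
    rwa [habs_a, Complex.ofReal_one, one_mul] at h1
  have has_exp : Complex.exp ((as.arg : ℂ) * I) = as := by
    have h1 := Complex.norm_mul_exp_arg_mul_I as
    rwa [habs_as, Complex.ofReal_one, one_mul] at h1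
  -- membership of the arguments
  have hφmem : a.arg ∈ Set.Ioc (-(Real.pi / r)) (Real.pi / r) := by
    have h1 := hrel
    unfold RelatedTo at h1
    rw [hv, ← hu, ← ha] at h1
    exact h1
  have hψmem : as.arg ∈ Set.Ioc (-(Real.pi / r)) (Real.pi / r) := by
    have h1 := hrels
    unfold RelatedTo at h1
    rw [hvs, ← hus, ← has] at h1
    exact h1
  -- a^r as an exponential
  have hpow_exp : a ^ r = Complex.exp ((((r : ℝ) * a.arg : ℝ) : ℂ) * I) := by
    conv_lhs => rw [← ha_exp]
    rw [← Complex.exp_nat_mul]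
    congr 1
    push_cast
    ring
  have hpow_exps : as ^ r = Complex.exp ((((r : ℝ) * as.arg : ℝ) : ℂ) * I) := by
    conv_lhs => rw [← has_exp]
    rw [← Complex.exp_nat_mul]
    congr 1
    push_cast
    ring
  -- ζ in terms of a
  have har : a ^ r = u ^ r / ((starRingEnd ℂ) u) ^ r := by
    rw [ha, mul_pow, div_pow, inv_pow, hω, inv_one, mul_one]
  have hars : as ^ r = us ^ r / ((starRingEnd ℂ) us) ^ r := by
    rw [has, mul_pow, div_pow, inv_pow, hω, inv_one, mul_one]
  have hzeta : zetaF α β γ δ r x y = ‖a ^ r - 1‖ := by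
    have e : a ^ r - 1 = form α β γ δ r x y / ((starRingEnd ℂ) u) ^ r := by
      rw [hform, har]
      field_simp
    rw [zetaF, e, norm_div, norm_pow, Complex.norm_conj, hZ]
  have hzetas : zetaF α β γ δ r xs ys = ‖as ^ r - 1‖ := by
    have e : as ^ r - 1 = form α β γ δ r xs ys / ((starRingEnd ℂ) us) ^ r := by
      rw [hforms, hars]
      field_simp
    rw [zetaF, e, norm_div, norm_pow, Complex.norm_conj, hZs]
  have hz1 : zetaF α β γ δ r x y = 2 * |Real.sin ((r : ℝ) * a.arg / 2)| := by
    rw [hzeta, hpow_exp, abs_exp_mul_I_sub_one]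
  have hz1s : zetaF α β γ δ r xs ys = 2 * |Real.sin ((r : ℝ) * as.arg / 2)| := by
    rw [hzetas, hpow_exps, abs_exp_mul_I_sub_one]
  -- the sine comparison from ζ* ≤ ζ
  have hle : |Real.sin ((r : ℝ) * as.arg / 2)| ≤ |Real.sin ((r : ℝ) * a.arg / 2)| := by
    rw [hz1, hz1s] at hζ
    linarith
  -- core inequality
  have hcore : |Real.sin ((a.arg - as.arg) / 2)| ^ r ≤ zetaF α β γ δ r x y := by
    rw [hz1]
    exact core_real r hr a.arg as.arg hφmem hψmem hle
  -- |a - as|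
  have haas : ‖a - as‖ = 2 * |Real.sin ((a.arg - as.arg) / 2)| := by
    conv_lhs => rw [← ha_exp, ← has_exp]
    rw [abs_exp_sub_exp]
  -- determinant identity
  have hdet : u * (starRingEnd ℂ) us - (starRingEnd ℂ) u * us
      = j * ((x * ys - y * xs : ℤ) : ℂ) := by
    rw [← hvs, ← hv, hu, hus]
    simp only [lin, hj]
    push_cast
    ring
  have hn : (x * ys - y * xs : ℤ) ≠ 0 := cross_ne x y xs ys hg hgs hne
  have habsn : (1 : ℝ) ≤ ‖((x * ys - y * xs : ℤ) : ℂ)‖ := by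
    rw [Complex.norm_intCast]
    have := Int.one_le_abs hn
    exact_mod_cast this
  have hiden : u * (starRingEnd ℂ) us - (starRingEnd ℂ) u * us
      = ω * (a - as) * ((starRingEnd ℂ) u * (starRingEnd ℂ) us) := by
    rw [ha, has]
    field_simp
  have hJ : ‖j‖ ≤ ‖u‖ * ‖us‖ * ‖a - as‖ := by
    calc ‖j‖ ≤ ‖j‖ * ‖((x * ys - y * xs : ℤ) : ℂ)‖ :=
          le_mul_of_one_le_right (norm_nonneg _) habsn
    _ = ‖u * (starRingEnd ℂ) us - (starRingEnd ℂ) u * us‖ := by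
          rw [hdet, norm_mul]
    _ = ‖u‖ * ‖us‖ * ‖a - as‖ := by
          rw [hiden, norm_mul, norm_mul, norm_mul, hωabs, Complex.norm_conj, Complex.norm_conj,
            one_mul]
          ring
  -- positivity facts
  have hhpos : (0 : ℝ) < (h : ℝ) := by exact_mod_cast Nat.pos_of_ne_zero (by omega)
  have hrtpos : (0 : ℝ) < (h : ℝ) ^ (1 / (r : ℝ)) := Real.rpow_pos_of_pos hhpos _
  have hrt : ((h : ℝ) ^ (1 / (r : ℝ))) ^ r = (h : ℝ) := by
    rw [← Real.rpow_natCast ((h : ℝ) ^ (1 / (r : ℝ))) r, ← Real.rpow_mul hhpos.le, one_div,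
      inv_mul_cancel₀ (by exact_mod_cast hr0 : (r : ℝ) ≠ 0), Real.rpow_one]
  have hFeq : zetaF α β γ δ r x y * ‖u‖ ^ r
      = ‖form α β γ δ r x y‖ := by
    rw [zetaF, hZ]
    field_simp
  -- the key step
  have hstep : ‖u‖ * ‖a - as‖ ≤ 2 * (h : ℝ) ^ (1 / (r : ℝ)) := by
    apply le_of_pow_le_pow_left₀ hr0 (by positivity)
    rw [mul_pow, mul_pow, hrt, haas, mul_pow]
    calc ‖u‖ ^ r * (2 ^ r * |Real.sin ((a.arg - as.arg) / 2)| ^ r)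
        ≤ ‖u‖ ^ r * (2 ^ r * zetaF α β γ δ r x y) := by
          apply mul_le_mul_of_nonneg_left _ (by positivity)
          apply mul_le_mul_of_nonneg_left hcore (by positivity)
    _ = 2 ^ r * (zetaF α β γ δ r x y * ‖u‖ ^ r) := by ring
    _ = 2 ^ r * ‖form α β γ δ r x y‖ := by rw [hFeq]
    _ ≤ 2 ^ r * (h : ℝ) := by
          apply mul_le_mul_of_nonneg_left hFh (by positivity)
  -- conclusion
  rw [div_le_iff₀ (by positivity : (0 : ℝ) < 2 * (h : ℝ) ^ (1 / (r : ℝ)))]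
  calc ‖j‖ ≤ ‖u‖ * ‖us‖ * ‖a - as‖ := hJ
  _ = ‖us‖ * (‖u‖ * ‖a - as‖) := by ring
  _ ≤ ‖us‖ * (2 * (h : ℝ) ^ (1 / (r : ℝ))) :=
        mul_le_mul_of_nonneg_left hstep (norm_nonneg _)
  _ = Zmax α β γ δ xs ys * (2 * (h : ℝ) ^ (1 / (r : ℝ))) := by rw [hZs]
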